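/- arXiv:0806.4352 — 3 statements merged into one kernel-verified Lean document; each statement's English description precedes it below -/
import Mathlib

section
/- Let a, b, c be real numbers with b ≠ 0, let a₀ : ℝ → ℝ and let a₁ : ℝ → ℝ be continuously differentiable. Define φ(x̄) = (x̄ − c(1 + a·x̄))/(b(1 + a·x̄)), t(x̄) = 1 + a·x̄, ā₁(x̄) = a₁(φ(x̄))/(b³ t(x̄)⁶), and ā₀(x̄) = a₀(φ(x̄))/(b⁴ t(x̄)⁸) − 3a·a₁(φ(x̄))/(b³ t(x̄)⁷) on {x̄ : t(x̄) ≠ 0}. Then for every x̄ with t(x̄) ≠ 0 and a₁(φ(x̄)) ≠ 0, one has (−2ā₀(x̄) + ā₁′(x̄))³/ā₁(x̄)⁴ = (−2a₀ + a₁′)³/a₁⁴ evaluated at φ(x̄). -/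
/-- The point transformation of the independent variable:
`φ(x̄) = (x̄ − c(1 + a x̄)) / (b(1 + a x̄))`. -/
noncomputable def phi (a b c : ℝ) (x : ℝ) : ℝ :=
  (x - c * (1 + a * x)) / (b * (1 + a * x))

/-- The transformed coefficient `ā₁(x̄) = a₁(φ(x̄)) / (b³ (1 + a x̄)⁶)`
for the canonical form `y⁽⁴⁾ + a₁ y′ + a₀ y = 0`. -/
noncomputable def abar1 (a b c : ℝ) (a1 : ℝ → ℝ) (x : ℝ) : ℝ :=
  a1 (phi a b c x) / (b ^ 3 * (1 + a * x) ^ 6)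

/-- The transformed coefficient
`ā₀(x̄) = a₀(φ(x̄))/(b⁴ (1+a x̄)⁸) − 3a a₁(φ(x̄))/(b³ (1+a x̄)⁷)`
for the canonical form `y⁽⁴⁾ + a₁ y′ + a₀ y = 0`. -/
noncomputable def abar0 (a b c : ℝ) (a0 a1 : ℝ → ℝ) (x : ℝ) : ℝ :=
  a0 (phi a b c x) / (b ^ 4 * (1 + a * x) ^ 8)
    - 3 * a * a1 (phi a b c x) / (b ^ 3 * (1 + a * x) ^ 7)

/-- the invariant `Ψ₄^{1,1} = (−2a₀ + a₁′)³ / a₁⁴` of the canonical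
form `y⁽⁴⁾ + a₁ y′ + a₀ y = 0` is an absolute invariant of the structure
invariance group. -/
theorem stmt_13 (a b c : ℝ) (hb : b ≠ 0) (a0 a1 : ℝ → ℝ) (ha1 : ContDiff ℝ 1 a1) :
    ∀ xb : ℝ, 1 + a * xb ≠ 0 → a1 (phi a b c xb) ≠ 0 →
      (-2 * abar0 a b c a0 a1 xb + deriv (abar1 a b c a1) xb) ^ 3
        / (abar1 a b c a1 xb) ^ 4
      = (-2 * a0 (phi a b c xb) + deriv a1 (phi a b c xb)) ^ 3
        / (a1 (phi a b c xb)) ^ 4 := by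
  intro xb ht ha1ne
  set t := 1 + a * xb with htdef
  set p := phi a b c xb with hpdef
  have hbt : b * t ≠ 0 := mul_ne_zero hb ht
  have hden : b ^ 3 * t ^ 6 ≠ 0 := mul_ne_zero (pow_ne_zero 3 hb) (pow_ne_zero 6 ht)
  -- derivative of 1 + a*x
  have hlin : HasDerivAt (fun x : ℝ => 1 + a * x) a xb := by
    simpa using ((hasDerivAt_id xb).const_mul a).const_add 1
  -- derivative of phi
  have hnum : HasDerivAt (fun x : ℝ => x - c * (1 + a * x)) (1 - c * a) xb :=
    (hasDerivAt_id xb).sub (hlin.const_mul c)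
  have hdenl : HasDerivAt (fun x : ℝ => b * (1 + a * x)) (b * a) xb := hlin.const_mul b
  have hphi : HasDerivAt (phi a b c) (1 / (b * t ^ 2)) xb := by
    have h := hnum.div hdenl hbt
    have : ((1 - c * a) * (b * t) - (xb - c * t) * (b * a)) / (b * t) ^ 2
        = 1 / (b * t ^ 2) := by
      field_simp
      ring
    rw [this] at h
    exact h
  -- derivative of a1 ∘ phi
  have ha1d : HasDerivAt a1 (deriv a1 p) p :=
    ((ha1.differentiable one_ne_zero) p).hasDerivAt
  have hcomp : HasDerivAt (fun x => a1 (phi a b c x))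
      (deriv a1 p * (1 / (b * t ^ 2))) xb := ha1d.comp xb hphi
  -- derivative of denominator
  have hg : HasDerivAt (fun x : ℝ => b ^ 3 * (1 + a * x) ^ 6)
      (b ^ 3 * (6 * t ^ 5 * a)) xb := by
    have := (hlin.pow 6).const_mul (b ^ 3)
    simpa [mul_comm, mul_assoc, mul_left_comm] using this
  have habar1 : HasDerivAt (abar1 a b c a1)
      ((deriv a1 p * (1 / (b * t ^ 2)) * (b ^ 3 * t ^ 6)
        - a1 p * (b ^ 3 * (6 * t ^ 5 * a))) / (b ^ 3 * t ^ 6) ^ 2) xb := by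
    have h := hcomp.div hg hden
    exact h
  have hderiv := habar1.deriv
  rw [hderiv]
  unfold abar0 abar1
  rw [← hpdef, ← htdef]
  have ha1p4 : a1 p ^ 4 ≠ 0 := pow_ne_zero 4 ha1ne
  field_simp
  ring
end

section
/- Let a, b, c be real numbers with b ≠ 0, and let a₀, a₁ : ℝ → ℝ be continuously differentiable. Define φ(x̄) = (x̄ − c(1 + a·x̄))/(b(1 + a·x̄)), t(x̄) = 1 + a·x̄, ā₁(x̄) = a₁(φ(x̄))/(b³ t(x̄)⁶), and ā₀(x̄) = a₀(φ(x̄))/(b⁴ t(x̄)⁸) − 3a·a₁(φ(x̄))/(b³ t(x̄)⁷) on {x̄ : t(x̄) ≠ 0}. Then for every x̄ with t(x̄) ≠ 0 and a₁(φ(x̄)) ≠ 0, one has (ā₀′(x̄) − ā₀(x̄)(ā₀(x̄) + 3ā₁′(x̄))/(3ā₁(x̄)))³/ā₁(x̄)⁵ = (a₀′ − a₀(a₀ + 3a₁′)/(3a₁))³/a₁⁵ evaluated at φ(x̄). -/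
set_option maxHeartbeats 1000000 in
private lemma key (a b T A0 A1 d0 d1 : ℝ) (hb : b ≠ 0) (hT : T ≠ 0) (hA1 : A1 ≠ 0) :
    (((d0 * (1 / (b * T ^ 2)) * (b ^ 4 * T ^ 8)
        - A0 * (b ^ 4 * ((8 : ℕ) * T ^ 7 * a))) / (b ^ 4 * T ^ 8) ^ 2
       - ((3 * a * (d1 * (1 / (b * T ^ 2)))) * (b ^ 3 * T ^ 7)
        - 3 * a * A1 * (b ^ 3 * ((7 : ℕ) * T ^ 6 * a))) / (b ^ 3 * T ^ 7) ^ 2)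
      - (A0 / (b ^ 4 * T ^ 8) - 3 * a * A1 / (b ^ 3 * T ^ 7))
          * ((A0 / (b ^ 4 * T ^ 8) - 3 * a * A1 / (b ^ 3 * T ^ 7))
             + 3 * ((d1 * (1 / (b * T ^ 2)) * (b ^ 3 * T ^ 6)
        - A1 * (b ^ 3 * ((6 : ℕ) * T ^ 5 * a))) / (b ^ 3 * T ^ 6) ^ 2))
          / (3 * (A1 / (b ^ 3 * T ^ 6)))) ^ 3
      / (A1 / (b ^ 3 * T ^ 6)) ^ 5
    = (d0 - A0 * (A0 + 3 * d1) / (3 * A1)) ^ 3 / A1 ^ 5 := by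
  have hnum : ((d0 * (1 / (b * T ^ 2)) * (b ^ 4 * T ^ 8)
        - A0 * (b ^ 4 * ((8 : ℕ) * T ^ 7 * a))) / (b ^ 4 * T ^ 8) ^ 2
       - ((3 * a * (d1 * (1 / (b * T ^ 2)))) * (b ^ 3 * T ^ 7)
        - 3 * a * A1 * (b ^ 3 * ((7 : ℕ) * T ^ 6 * a))) / (b ^ 3 * T ^ 7) ^ 2)
      - (A0 / (b ^ 4 * T ^ 8) - 3 * a * A1 / (b ^ 3 * T ^ 7))
          * ((A0 / (b ^ 4 * T ^ 8) - 3 * a * A1 / (b ^ 3 * T ^ 7))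
             + 3 * ((d1 * (1 / (b * T ^ 2)) * (b ^ 3 * T ^ 6)
        - A1 * (b ^ 3 * ((6 : ℕ) * T ^ 5 * a))) / (b ^ 3 * T ^ 6) ^ 2))
          / (3 * (A1 / (b ^ 3 * T ^ 6)))
      = (d0 - A0 * (A0 + 3 * d1) / (3 * A1)) / (b ^ 5 * T ^ 10) := by
    push_cast
    field_simp
    ring
  rw [hnum]
  generalize (d0 - A0 * (A0 + 3 * d1) / (3 * A1)) = N
  field_simp

/-- the invariant `Ψ₄^{1,2} = (a₀′ − a₀(a₀ + 3a₁′)/(3a₁))³ / a₁⁵`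
of the canonical form `y⁽⁴⁾ + a₁ y′ + a₀ y = 0` is an absolute invariant of the
structure invariance group. -/
theorem stmt_14 (a b c : ℝ) (hb : b ≠ 0) (a0 a1 : ℝ → ℝ)
    (ha0 : ContDiff ℝ 1 a0) (ha1 : ContDiff ℝ 1 a1) :
    ∀ xb : ℝ, 1 + a * xb ≠ 0 → a1 (phi a b c xb) ≠ 0 →
      (deriv (abar0 a b c a0 a1) xb
          - abar0 a b c a0 a1 xb
              * (abar0 a b c a0 a1 xb + 3 * deriv (abar1 a b c a1) xb)
              / (3 * abar1 a b c a1 xb)) ^ 3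
        / (abar1 a b c a1 xb) ^ 5
      = (deriv a0 (phi a b c xb)
          - a0 (phi a b c xb)
              * (a0 (phi a b c xb) + 3 * deriv a1 (phi a b c xb))
              / (3 * a1 (phi a b c xb))) ^ 3
        / (a1 (phi a b c xb)) ^ 5 := by
  intro xb ht hA1
  set p := phi a b c xb with hp
  set T := 1 + a * xb with hT
  have htd : HasDerivAt (fun x : ℝ => 1 + a * x) a xb := by
    simpa using ((hasDerivAt_id xb).const_mul a).const_add 1
  have hbt : b * T ≠ 0 := mul_ne_zero hb ht
  have hnum : HasDerivAt (fun x : ℝ => x - c * (1 + a * x)) (1 - c * a) xb :=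
    (hasDerivAt_id xb).sub (htd.const_mul c)
  have hden : HasDerivAt (fun x : ℝ => b * (1 + a * x)) (b * a) xb := htd.const_mul b
  have hphi : HasDerivAt (phi a b c) (1 / (b * T ^ 2)) xb := by
    have h : HasDerivAt (phi a b c) _ xb :=
      hnum.div hden hbt
    convert h using 1
    rw [← hT]
    field_simp
    ring
  have hA1d : HasDerivAt a1 (deriv a1 p) p :=
    ((ha1.differentiable one_ne_zero) p).hasDerivAt
  have hA0d : HasDerivAt a0 (deriv a0 p) p :=
    ((ha0.differentiable one_ne_zero) p).hasDerivAt
  have hA1c : HasDerivAt (fun x => a1 (phi a b c x)) (deriv a1 p * (1 / (b * T ^ 2))) xb :=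
    HasDerivAt.comp xb hA1d hphi
  have hA0c : HasDerivAt (fun x => a0 (phi a b c x)) (deriv a0 p * (1 / (b * T ^ 2))) xb :=
    HasDerivAt.comp xb hA0d hphi
  have hd6 : HasDerivAt (fun x : ℝ => b ^ 3 * (1 + a * x) ^ 6)
      (b ^ 3 * ((6 : ℕ) * T ^ 5 * a)) xb := by
    simpa using (htd.pow 6).const_mul (b ^ 3)
  have hd7 : HasDerivAt (fun x : ℝ => b ^ 3 * (1 + a * x) ^ 7)
      (b ^ 3 * ((7 : ℕ) * T ^ 6 * a)) xb := by
    simpa using (htd.pow 7).const_mul (b ^ 3)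
  have hd8 : HasDerivAt (fun x : ℝ => b ^ 4 * (1 + a * x) ^ 8)
      (b ^ 4 * ((8 : ℕ) * T ^ 7 * a)) xb := by
    simpa using (htd.pow 8).const_mul (b ^ 4)
  have h6ne : b ^ 3 * T ^ 6 ≠ 0 := mul_ne_zero (pow_ne_zero _ hb) (pow_ne_zero _ ht)
  have h7ne : b ^ 3 * T ^ 7 ≠ 0 := mul_ne_zero (pow_ne_zero _ hb) (pow_ne_zero _ ht)
  have h8ne : b ^ 4 * T ^ 8 ≠ 0 := mul_ne_zero (pow_ne_zero _ hb) (pow_ne_zero _ ht)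
  have hab1 : HasDerivAt (abar1 a b c a1)
      ((deriv a1 p * (1 / (b * T ^ 2)) * (b ^ 3 * T ^ 6)
        - a1 p * (b ^ 3 * ((6 : ℕ) * T ^ 5 * a))) / (b ^ 3 * T ^ 6) ^ 2) xb := by
    exact hA1c.div hd6 h6ne
  have hab0 : HasDerivAt (abar0 a b c a0 a1)
      ((deriv a0 p * (1 / (b * T ^ 2)) * (b ^ 4 * T ^ 8)
        - a0 p * (b ^ 4 * ((8 : ℕ) * T ^ 7 * a))) / (b ^ 4 * T ^ 8) ^ 2
       - ((3 * a * (deriv a1 p * (1 / (b * T ^ 2)))) * (b ^ 3 * T ^ 7)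
        - 3 * a * a1 p * (b ^ 3 * ((7 : ℕ) * T ^ 6 * a))) / (b ^ 3 * T ^ 7) ^ 2) xb := by
    have h1 := hA0c.div hd8 h8ne
    have h2 := ((hA1c.const_mul (3 * a)).div hd7 h7ne)
    exact h1.sub h2
  rw [hab0.deriv, hab1.deriv]
  simp only [abar0, abar1, ← hp, ← hT]
  exact key a b T (a0 p) (a1 p) (deriv a0 p) (deriv a1 p) hb ht hA1
end

section
/- Let a, b, c be real numbers with b ≠ 0, let a₀ : ℝ → ℝ and let a₁ : ℝ → ℝ be twice continuously differentiable. Define φ(x̄) = (x̄ − c(1 + a·x̄))/(b(1 + a·x̄)), t(x̄) = 1 + a·x̄, ā₁(x̄) = a₁(φ(x̄))/(b³ t(x̄)⁶), and ā₀(x̄) = a₀(φ(x̄))/(b⁴ t(x̄)⁸) − 3a·a₁(φ(x̄))/(b³ t(x̄)⁷) on {x̄ : t(x̄) ≠ 0}. Then for every x̄ with t(x̄) ≠ 0 and a₁(φ(x̄)) ≠ 0, one has (14ā₀(x̄)² − 14ā₀(x̄)ā₁′(x̄) + 3ā₁(x̄)ā₁″(x̄))³/(27ā₁(x̄)⁸)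 = (14a₀² − 14a₀a₁′ + 3a₁a₁″)³/(27a₁⁸) evaluated at φ(x̄). -/
lemma phi_hasDerivAt (a b c : ℝ) (hb : b ≠ 0) {x : ℝ} (ht : 1 + a * x ≠ 0) :
    HasDerivAt (phi a b c) (1 / (b * (1 + a * x) ^ 2)) x := by
  have hu : HasDerivAt (fun x : ℝ => x - c * (1 + a * x)) (1 - c * a) x := by
    simpa using (hasDerivAt_id' x).fun_sub
      ((((hasDerivAt_id x).const_mul a).const_add 1).const_mul c)
  have hv : HasDerivAt (fun x : ℝ => b * (1 + a * x)) (b * a) x := by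
    simpa using (((hasDerivAt_id x).const_mul a).const_add 1).const_mul b
  have := hu.div hv (mul_ne_zero hb ht)
  refine this.congr_deriv ?_
  field_simp
  ring

lemma tpow_hasDerivAt (a b : ℝ) (n : ℕ) (x : ℝ) :
    HasDerivAt (fun x : ℝ => b ^ 3 * (1 + a * x) ^ n)
      (b ^ 3 * ((n : ℝ) * (1 + a * x) ^ (n - 1) * a)) x := by
  simpa using ((((hasDerivAt_id x).const_mul a).const_add 1).pow n).const_mul (b^3)

lemma abar1_hasDerivAt (a b c : ℝ) (hb : b ≠ 0) (a1 : ℝ → ℝ)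
    (ha1 : Differentiable ℝ a1) {x : ℝ} (ht : 1 + a * x ≠ 0) :
    HasDerivAt (abar1 a b c a1)
      (deriv a1 (phi a b c x) / (b ^ 4 * (1 + a * x) ^ 8)
        - 6 * a * a1 (phi a b c x) / (b ^ 3 * (1 + a * x) ^ 7)) x := by
  have hcomp : HasDerivAt (fun x => a1 (phi a b c x))
      (deriv a1 (phi a b c x) * (1 / (b * (1 + a * x) ^ 2))) x :=
    ((ha1 (phi a b c x)).hasDerivAt).comp x (phi_hasDerivAt a b c hb ht)
  have hv := tpow_hasDerivAt a b 6 x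
  have hvne : b ^ 3 * (1 + a * x) ^ 6 ≠ 0 := mul_ne_zero (pow_ne_zero _ hb) (pow_ne_zero _ ht)
  have := hcomp.div hv hvne
  refine this.congr_deriv ?_
  field_simp
  ring

lemma g_hasDerivAt (a b c : ℝ) (hb : b ≠ 0) (a1 : ℝ → ℝ)
    (ha1 : Differentiable ℝ a1) (hda1 : Differentiable ℝ (deriv a1))
    {x : ℝ} (ht : 1 + a * x ≠ 0) :
    HasDerivAt (fun x => deriv a1 (phi a b c x) / (b ^ 4 * (1 + a * x) ^ 8)
        - 6 * a * a1 (phi a b c x) / (b ^ 3 * (1 + a * x) ^ 7))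
      (deriv (deriv a1) (phi a b c x) / (b ^ 5 * (1 + a * x) ^ 10)
        - 14 * a * deriv a1 (phi a b c x) / (b ^ 4 * (1 + a * x) ^ 9)
        + 42 * a ^ 2 * a1 (phi a b c x) / (b ^ 3 * (1 + a * x) ^ 8)) x := by
  have hphi := phi_hasDerivAt a b c hb ht
  have h1 : HasDerivAt (fun x => deriv a1 (phi a b c x))
      (deriv (deriv a1) (phi a b c x) * (1 / (b * (1 + a * x) ^ 2))) x :=
    ((hda1 (phi a b c x)).hasDerivAt).comp x hphi
  have h2 : HasDerivAt (fun x => a1 (phi a b c x))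
      (deriv a1 (phi a b c x) * (1 / (b * (1 + a * x) ^ 2))) x :=
    ((ha1 (phi a b c x)).hasDerivAt).comp x hphi
  have hv8 : HasDerivAt (fun x : ℝ => b ^ 4 * (1 + a * x) ^ 8)
      (b ^ 4 * ((8 : ℝ) * (1 + a * x) ^ 7 * a)) x := by
    simpa using ((((hasDerivAt_id x).const_mul a).const_add 1).pow 8).const_mul (b^4)
  have hv7 := tpow_hasDerivAt a b 7 x
  have hA := h1.div hv8 (mul_ne_zero (pow_ne_zero _ hb) (pow_ne_zero _ ht))
  have hB := ((h2.const_mul (6 * a)).div hv7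
    (mul_ne_zero (pow_ne_zero _ hb) (pow_ne_zero _ ht)))
  have := hA.fun_sub hB
  refine this.congr_deriv ?_
  push_cast
  field_simp
  ring

/-- the invariant `Ψ₄^{2,3} = (14a₀² − 14a₀a₁′ + 3a₁a₁″)³/(27a₁⁸)`
of the canonical form `y⁽⁴⁾ + a₁ y′ + a₀ y = 0` is an absolute invariant of the
structure invariance group. -/
theorem stmt_15 (a b c : ℝ) (hb : b ≠ 0) (a0 a1 : ℝ → ℝ) (ha1 : ContDiff ℝ 2 a1) :
    ∀ xb : ℝ, 1 + a * xb ≠ 0 → a1 (phi a b c xb) ≠ 0 →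
      (14 * (abar0 a b c a0 a1 xb) ^ 2
          - 14 * abar0 a b c a0 a1 xb * deriv (abar1 a b c a1) xb
          + 3 * abar1 a b c a1 xb * iteratedDeriv 2 (abar1 a b c a1) xb) ^ 3
        / (27 * (abar1 a b c a1 xb) ^ 8)
      = (14 * (a0 (phi a b c xb)) ^ 2
          - 14 * a0 (phi a b c xb) * deriv a1 (phi a b c xb)
          + 3 * a1 (phi a b c xb) * iteratedDeriv 2 a1 (phi a b c xb)) ^ 3
        / (27 * (a1 (phi a b c xb)) ^ 8) := by
  intro xb ht hA1
  have hdiff : Differentiable ℝ a1 := ha1.differentiable two_ne_zero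
  have h2' : ContDiff ℝ ((1 : WithTop ℕ∞) + 1) a1 := by exact_mod_cast ha1
  have hdd : Differentiable ℝ (deriv a1) :=
    ((contDiff_succ_iff_deriv.mp h2').2.2).differentiable one_ne_zero
  -- the open set
  have hopen : IsOpen {x : ℝ | 1 + a * x ≠ 0} := by
    have : Continuous fun x : ℝ => 1 + a * x := by continuity
    exact isOpen_compl_singleton.preimage this
  have hmem : {x : ℝ | 1 + a * x ≠ 0} ∈ nhds xb := hopen.mem_nhds ht
  have hd1 : deriv (abar1 a b c a1) xb
      = deriv a1 (phi a b c xb) / (b ^ 4 * (1 + a * xb) ^ 8)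
        - 6 * a * a1 (phi a b c xb) / (b ^ 3 * (1 + a * xb) ^ 7) :=
    (abar1_hasDerivAt a b c hb a1 hdiff ht).deriv
  have heq : deriv (abar1 a b c a1) =ᶠ[nhds xb]
      (fun x => deriv a1 (phi a b c x) / (b ^ 4 * (1 + a * x) ^ 8)
        - 6 * a * a1 (phi a b c x) / (b ^ 3 * (1 + a * x) ^ 7)) := by
    filter_upwards [hmem] with x hx
    exact (abar1_hasDerivAt a b c hb a1 hdiff hx).deriv
  have hd2 : iteratedDeriv 2 (abar1 a b c a1) xb
      = deriv (deriv a1) (phi a b c xb) / (b ^ 5 * (1 + a * xb) ^ 10)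
        - 14 * a * deriv a1 (phi a b c xb) / (b ^ 4 * (1 + a * xb) ^ 9)
        + 42 * a ^ 2 * a1 (phi a b c xb) / (b ^ 3 * (1 + a * xb) ^ 8) := by
    rw [show (2 : ℕ) = 1 + 1 from rfl, iteratedDeriv_succ, iteratedDeriv_one]
    rw [heq.deriv_eq]
    exact (g_hasDerivAt a b c hb a1 hdiff hdd ht).deriv
  have hit2 : iteratedDeriv 2 a1 (phi a b c xb) = deriv (deriv a1) (phi a b c xb) := by
    rw [show (2 : ℕ) = 1 + 1 from rfl, iteratedDeriv_succ, iteratedDeriv_one]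
  rw [hd1, hd2, hit2]
  set t := 1 + a * xb with htdef
  set A0 := a0 (phi a b c xb)
  set A1 := a1 (phi a b c xb)
  set D1 := deriv a1 (phi a b c xb)
  set D2 := deriv (deriv a1) (phi a b c xb)
  have key : 14 * (abar0 a b c a0 a1 xb) ^ 2
      - 14 * abar0 a b c a0 a1 xb
        * (D1 / (b ^ 4 * t ^ 8) - 6 * a * A1 / (b ^ 3 * t ^ 7))
      + 3 * abar1 a b c a1 xb
        * (D2 / (b ^ 5 * t ^ 10) - 14 * a * D1 / (b ^ 4 * t ^ 9)
            + 42 * a ^ 2 * A1 / (b ^ 3 * t ^ 8))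
      = (14 * A0 ^ 2 - 14 * A0 * D1 + 3 * A1 * D2) / (b ^ 8 * t ^ 16) := by
    rw [abar0, abar1, ← htdef]
    field_simp
    ring
  rw [key, abar1, ← htdef]
  have hA1' : a1 (phi a b c xb) = A1 := rfl
  rw [hA1']
  generalize 14 * A0 ^ 2 - 14 * A0 * D1 + 3 * A1 * D2 = E
  field_simp
end
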